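/- Given a CSP instance, the 1-safe Petri net constructed from it reaches the final marking (one token in place g, zero elsewhere) from the initial marking (one token in each variable place qi, zero elsewhere) iff the CSP instance has a satisfying assignment. -/
import Mathlib


/-- A Petri net: places `P`, transitions `T`, incidence functions. -/
structure PetriNet (P T : Type) where
  Pre : P → T → ℕ
  Post : P → T → ℕ

variable {P T : Type}

def enabled (N : PetriNet P T) (M : P → ℕ) (t : T) : Prop := ∀ p, N.Pre p t ≤ M p

def fire (N : PetriNet P T) (M : P → ℕ) (t : T) : P → ℕ :=
  fun p => M p - N.Pre p t + N.Post p t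

def step (N : PetriNet P T) (M M' : P → ℕ) : Prop :=
  ∃ t, enabled N M t ∧ M' = fire N M t

def reachable (N : PetriNet P T) (M0 M : P → ℕ) : Prop :=
  Relation.ReflTransGen (step N) M0 M

/-- `1`-safety: every reachable marking has at most one token per place. -/
def oneSafe (N : PetriNet P T) (M0 : P → ℕ) : Prop :=
  ∀ M, reachable N M0 M → ∀ p, M p ≤ 1

def incident (N : PetriNet P T) (p : P) (t : T) : Prop := 1 ≤ N.Pre p t + N.Post p t


/-- A CSP instance with `n` variables, `m` constraints and domain `Fin dom`: each
constraint has a scope and a set of admissible tuples (given as assignments, compared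
only on the scope). -/
structure CSP (n m dom : ℕ) where
  scope : Fin m → Finset (Fin n)
  adm : Fin m → Finset (Fin n → Fin dom)

/-- Places of the net constructed from a CSP instance. -/
inductive CPl (n m dom : ℕ) : Type
  | q (i : Fin n)
  | qv (i : Fin n) (j : Fin m) (d : Fin dom)
  | C (j : Fin m)
  | g
deriving DecidableEq

/-- Transitions of the net constructed from a CSP instance. -/
inductive CTr (n m dom : ℕ) : Type
  | t (i : Fin n) (d : Fin dom)
  | tc (i : Fin n) (j : Fin m) (d : Fin dom)
  | con (j : Fin m) (f : Fin n → Fin dom)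
  | fin

variable {n m dom : ℕ}

/-- Input incidence of the CSP net: `t i d` consumes the token of `q i`; the cleanup
`tc i j d` consumes a token from `q[i]_j^d`; the constraint-check `con j f` (for an
admissible tuple `f`) consumes the tokens `q[i]_j^{f i}` for the variables of its
scope (non-admissible tuples are blocked); `fin` consumes one token from each `C j`. -/
def cspPre (I : CSP n m dom) : CPl n m dom → CTr n m dom → ℕ := fun p τ =>
  match τ with
  | .t i _ => if p = .q i then 1 else 0
  | .tc i j d => if p = .qv i j d then 1 else 0
  | .con j f => if f ∈ I.adm j then (if ∃ i ∈ I.scope j, p = .qv i j (f i) then 1 else 0)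
      else (if p = .C j then 2 else 0)
  | .fin => if ∃ j, p = .C j then 1 else 0

/-- Output incidence of the CSP net: `t i d` puts a token in `q[i]_j^d` for every
constraint `j` containing `i`; `con j f` puts a token in `C j`; `fin` puts a token
in `g`. -/
def cspPost (I : CSP n m dom) : CPl n m dom → CTr n m dom → ℕ := fun p τ =>
  match τ with
  | .t i d => if ∃ j, i ∈ I.scope j ∧ p = .qv i j d then 1 else 0
  | .tc _ _ _ => 0
  | .con j f => if f ∈ I.adm j then (if p = .C j then 1 else 0) else 0
  | .fin => if p = .g then 1 else 0

/-- The Petri net constructed from the CSP instance. -/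
def cspNet (I : CSP n m dom) : PetriNet (CPl n m dom) (CTr n m dom) :=
  ⟨cspPre I, cspPost I⟩

/-- The initial marking: one token in each variable place `q i`. -/
def cspM0 : CPl n m dom → ℕ := fun p =>
  match p with
  | .q _ => 1
  | _ => 0

/-- The final marking: a single token in `g`. -/
def cspMf : CPl n m dom → ℕ := fun p =>
  match p with
  | .g => 1
  | _ => 0

/-- The CSP instance is satisfiable: some assignment restricts, on the scope of each
constraint, to an admissible tuple. -/
def Satisfiable (I : CSP n m dom) : Prop :=
  ∃ a : Fin n → Fin dom, ∀ j : Fin m, ∃ f ∈ I.adm j, ∀ i ∈ I.scope j, f i = a i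

/-! ### Auxiliary material for the proof -/

section Aux

variable (I : CSP n m dom)

/-- Evaluations of `fire` for each transition kind at each place kind. -/
@[simp] lemma fire_t_q (M : CPl n m dom → ℕ) (i' i : Fin n) (d : Fin dom) :
    fire (cspNet I) M (.t i d) (.q i') = M (.q i') - (if i' = i then 1 else 0) := by
  simp [fire, cspNet, cspPre, cspPost]

@[simp] lemma fire_t_qv (M : CPl n m dom → ℕ) (i' i : Fin n) (j : Fin m) (d' d : Fin dom) :
    fire (cspNet I) M (.t i d) (.qv i' j d') =
      M (.qv i' j d') + (if i ∈ I.scope j ∧ i' = i ∧ d' = d then 1 else 0) := by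
  simp only [fire, cspNet, cspPre, cspPost]
  rw [if_neg (show ¬((CPl.qv i' j d' : CPl n m dom) = .q i) by simp), Nat.sub_zero]
  by_cases hc : i ∈ I.scope j ∧ i' = i ∧ d' = d
  · obtain ⟨hs, rfl, rfl⟩ := hc
    rw [if_pos (⟨j, hs, rfl⟩ : ∃ j0, i' ∈ I.scope j0 ∧ (CPl.qv i' j d' : CPl n m dom) = CPl.qv i' j0 d'),
      if_pos ⟨hs, rfl, rfl⟩]
  · have hx : ¬ (∃ j0, i ∈ I.scope j0 ∧ (CPl.qv i' j d' : CPl n m dom) = CPl.qv i j0 d) := by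
      rintro ⟨j0, hj0, heq⟩
      injection heq with h1 h2 h3
      subst h1; subst h2; subst h3
      exact hc ⟨hj0, rfl, rfl⟩
    rw [if_neg hx, if_neg hc]

@[simp] lemma fire_t_C (M : CPl n m dom → ℕ) (j : Fin m) (i : Fin n) (d : Fin dom) :
    fire (cspNet I) M (.t i d) (.C j) = M (.C j) := by
  simp [fire, cspNet, cspPre, cspPost]

@[simp] lemma fire_t_g (M : CPl n m dom → ℕ) (i : Fin n) (d : Fin dom) :
    fire (cspNet I) M (.t i d) .g = M .g := by
  simp [fire, cspNet, cspPre, cspPost]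

@[simp] lemma fire_tc_q (M : CPl n m dom → ℕ) (i' i : Fin n) (j : Fin m) (d : Fin dom) :
    fire (cspNet I) M (.tc i j d) (.q i') = M (.q i') := by
  simp [fire, cspNet, cspPre, cspPost]

@[simp] lemma fire_tc_qv (M : CPl n m dom → ℕ) (i' i : Fin n) (j' j : Fin m) (d' d : Fin dom) :
    fire (cspNet I) M (.tc i j d) (.qv i' j' d') =
      M (.qv i' j' d') - (if i' = i ∧ j' = j ∧ d' = d then 1 else 0) := by
  simp only [fire, cspNet, cspPre, cspPost, CPl.qv.injEq, Nat.add_zero]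

@[simp] lemma fire_tc_C (M : CPl n m dom → ℕ) (j' : Fin m) (i : Fin n) (j : Fin m) (d : Fin dom) :
    fire (cspNet I) M (.tc i j d) (.C j') = M (.C j') := by
  simp [fire, cspNet, cspPre, cspPost]

@[simp] lemma fire_tc_g (M : CPl n m dom → ℕ) (i : Fin n) (j : Fin m) (d : Fin dom) :
    fire (cspNet I) M (.tc i j d) .g = M .g := by
  simp [fire, cspNet, cspPre, cspPost]

@[simp] lemma fire_con_q (M : CPl n m dom → ℕ) (i : Fin n) (j : Fin m) (f : Fin n → Fin dom) :
    fire (cspNet I) M (.con j f) (.q i) = M (.q i) := by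
  simp [fire, cspNet, cspPre, cspPost]

@[simp] lemma fire_con_qv (M : CPl n m dom → ℕ) (i : Fin n) (j' j : Fin m) (d : Fin dom)
    (f : Fin n → Fin dom) :
    fire (cspNet I) M (.con j f) (.qv i j' d) =
      M (.qv i j' d) - (if f ∈ I.adm j ∧ j' = j ∧ i ∈ I.scope j ∧ d = f i then 1 else 0) := by
  simp only [fire, cspNet, cspPre, cspPost]
  by_cases hf : f ∈ I.adm j
  · rw [if_pos hf, if_pos hf, if_neg (show ¬((CPl.qv i j' d : CPl n m dom) = .C j) by simp),
      Nat.add_zero]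
    by_cases hc : j' = j ∧ i ∈ I.scope j ∧ d = f i
    · obtain ⟨rfl, hs, rfl⟩ := hc
      rw [if_pos (⟨i, hs, rfl⟩ :
          ∃ i' ∈ I.scope j', (CPl.qv i j' (f i) : CPl n m dom) = CPl.qv i' j' (f i')),
        if_pos ⟨hf, rfl, hs, rfl⟩]
    · have hx : ¬ (∃ i' ∈ I.scope j, (CPl.qv i j' d : CPl n m dom) = CPl.qv i' j (f i')) := by
        rintro ⟨i'', hi'', heq⟩
        injection heq with h1 h2 h3
        subst h1; subst h2; subst h3
        exact hc ⟨rfl, hi'', rfl⟩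
      rw [if_neg hx, if_neg (fun h => hc h.2)]
  · rw [if_neg hf, if_neg hf,
      if_neg (show ¬((CPl.qv i j' d : CPl n m dom) = .C j) by simp),
      if_neg (fun (h : f ∈ I.adm j ∧ _) => hf h.1)]
    omega

@[simp] lemma fire_con_C (M : CPl n m dom → ℕ) (j' j : Fin m) (f : Fin n → Fin dom) :
    fire (cspNet I) M (.con j f) (.C j') =
      if f ∈ I.adm j then M (.C j') + (if j' = j then 1 else 0)
      else M (.C j') - (if j' = j then 2 else 0) := by
  by_cases hf : f ∈ I.adm j <;> simp [fire, cspNet, cspPre, cspPost, hf]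

@[simp] lemma fire_con_g (M : CPl n m dom → ℕ) (j : Fin m) (f : Fin n → Fin dom) :
    fire (cspNet I) M (.con j f) .g = M .g := by
  by_cases hf : f ∈ I.adm j <;> simp [fire, cspNet, cspPre, cspPost, hf]

@[simp] lemma fire_fin_q (M : CPl n m dom → ℕ) (i : Fin n) :
    fire (cspNet I) M .fin (.q i) = M (.q i) := by
  simp [fire, cspNet, cspPre, cspPost]

@[simp] lemma fire_fin_qv (M : CPl n m dom → ℕ) (i : Fin n) (j : Fin m) (d : Fin dom) :
    fire (cspNet I) M .fin (.qv i j d) = M (.qv i j d) := by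
  simp [fire, cspNet, cspPre, cspPost]

@[simp] lemma fire_fin_C (M : CPl n m dom → ℕ) (j : Fin m) :
    fire (cspNet I) M .fin (.C j) = M (.C j) - 1 := by
  simp [fire, cspNet, cspPre, cspPost]

@[simp] lemma fire_fin_g (M : CPl n m dom → ℕ) :
    fire (cspNet I) M .fin .g = M .g + 1 := by
  simp [fire, cspNet, cspPre, cspPost]

/-- The invariant used for the forward direction. -/
def CInv (a : Fin n → Fin dom) (M : CPl n m dom → ℕ) : Prop :=
  (∀ i, M (.q i) ≤ 1) ∧
  (∀ i j d, 1 ≤ M (.qv i j d) → d = a i ∧ i ∈ I.scope j ∧ M (.q i) = 0) ∧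
  (∀ j, 1 ≤ M (.C j) →
    (∃ f ∈ I.adm j, ∀ i ∈ I.scope j, f i = a i) ∧ ∀ i ∈ I.scope j, M (.q i) = 0) ∧
  (1 ≤ M .g → ∀ j,
    (∃ f ∈ I.adm j, ∀ i ∈ I.scope j, f i = a i) ∧ ∀ i ∈ I.scope j, M (.q i) = 0)

lemma inv_step {a : Fin n → Fin dom} {M M' : CPl n m dom → ℕ}
    (hI : CInv I a M) (h : step (cspNet I) M M') : ∃ a', CInv I a' M' := by
  obtain ⟨hA, hB, hC, hD⟩ := hI
  obtain ⟨τ, hen, rfl⟩ := h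
  cases τ with
  | t i d =>
    have hqi : 1 ≤ M (.q i) := by
      have := hen (.q i); simpa [cspNet, cspPre] using this
    refine ⟨Function.update a i d, ?_, ?_, ?_, ?_⟩
    · intro i'
      simp only [fire_t_q]
      have := hA i'; omega
    · intro i' j d' h1
      simp only [fire_t_qv] at h1
      simp only [fire_t_q]
      by_cases hnew : i ∈ I.scope j ∧ i' = i ∧ d' = d
      · obtain ⟨hs, rfl, rfl⟩ := hnew
        refine ⟨by simp, hs, ?_⟩
        rw [if_pos rfl]
        have := hA i'
        omega
      · simp only [if_neg hnew, Nat.add_zero] at h1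
        obtain ⟨rfl, hs, hq0⟩ := hB i' j d' h1
        have hne : i' ≠ i := by rintro rfl; omega
        refine ⟨(Function.update_of_ne hne _ _).symm, hs, ?_⟩
        rw [if_neg hne]
        omega
    · intro j h1
      simp only [fire_t_C] at h1
      obtain ⟨⟨f, hf, hfa⟩, hq0⟩ := hC j h1
      have hni : i ∉ I.scope j := by
        intro hi; have := hq0 i hi; omega
      refine ⟨⟨f, hf, fun i' hi' => ?_⟩, fun i' hi' => ?_⟩
      · have hne : i' ≠ i := by rintro rfl; exact hni hi'
        rw [Function.update_of_ne hne]; exact hfa i' hi'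
      · simp only [fire_t_q]; have := hq0 i' hi'; omega
    · intro hg j
      simp only [fire_t_g] at hg
      obtain ⟨⟨f, hf, hfa⟩, hq0⟩ := hD hg j
      have hni : i ∉ I.scope j := by
        intro hi; have := hq0 i hi; omega
      refine ⟨⟨f, hf, fun i' hi' => ?_⟩, fun i' hi' => ?_⟩
      · have hne : i' ≠ i := by rintro rfl; exact hni hi'
        rw [Function.update_of_ne hne]; exact hfa i' hi'
      · simp only [fire_t_q]; have := hq0 i' hi'; omega
  | tc i j d =>
    refine ⟨a, ?_, ?_, ?_, ?_⟩
    · intro i'; simp only [fire_tc_q]; exact hA i'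
    · intro i' j' d' h1
      simp only [fire_tc_qv] at h1
      simp only [fire_tc_q]
      exact hB i' j' d' (by omega)
    · intro j' h1
      simp only [fire_tc_C] at h1
      obtain ⟨hw, hq0⟩ := hC j' h1
      exact ⟨hw, fun i' hi' => by simp only [fire_tc_q]; exact hq0 i' hi'⟩
    · intro hg j'
      simp only [fire_tc_g] at hg
      obtain ⟨hw, hq0⟩ := hD hg j'
      exact ⟨hw, fun i' hi' => by simp only [fire_tc_q]; exact hq0 i' hi'⟩
  | con j f =>
    refine ⟨a, ?_, ?_, ?_, ?_⟩
    · intro i'; simp only [fire_con_q]; exact hA i'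
    · intro i' j' d' h1
      simp only [fire_con_qv] at h1
      simp only [fire_con_q]
      exact hB i' j' d' (by omega)
    · intro j' h1
      simp only [fire_con_C] at h1
      by_cases hf : f ∈ I.adm j
      · simp only [if_pos hf] at h1
        by_cases hjj : j' = j
        · subst hjj
          refine ⟨⟨f, hf, fun i' hi' => ?_⟩, fun i' hi' => ?_⟩
          · have hen' : 1 ≤ M (.qv i' j' (f i')) := by
              have := hen (.qv i' j' (f i'))
              simp only [cspNet, cspPre, if_pos hf] at this
              have hx : (∃ i'' ∈ I.scope j', CPl.qv i' j' (f i') = CPl.qv i'' j' (f i'')) :=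
                ⟨i', hi', rfl⟩
              rwa [if_pos hx] at this
            exact (hB i' j' (f i') hen').1
          · simp only [fire_con_q]
            have hen' : 1 ≤ M (.qv i' j' (f i')) := by
              have := hen (.qv i' j' (f i'))
              simp only [cspNet, cspPre, if_pos hf] at this
              have hx : (∃ i'' ∈ I.scope j', CPl.qv i' j' (f i') = CPl.qv i'' j' (f i'')) :=
                ⟨i', hi', rfl⟩
              rwa [if_pos hx] at this
            exact (hB i' j' (f i') hen').2.2
        · simp only [if_neg hjj, Nat.add_zero] at h1
          obtain ⟨hw, hq0⟩ := hC j' h1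
          exact ⟨hw, fun i' hi' => by simp only [fire_con_q]; exact hq0 i' hi'⟩
      · simp only [if_neg hf] at h1
        obtain ⟨hw, hq0⟩ := hC j' (by omega)
        exact ⟨hw, fun i' hi' => by simp only [fire_con_q]; exact hq0 i' hi'⟩
    · intro hg j'
      simp only [fire_con_g] at hg
      obtain ⟨hw, hq0⟩ := hD hg j'
      exact ⟨hw, fun i' hi' => by simp only [fire_con_q]; exact hq0 i' hi'⟩
  | fin =>
    have hCj : ∀ j, 1 ≤ M (.C j) := by
      intro j
      have := hen (.C j)
      simpa [cspNet, cspPre] using this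
    refine ⟨a, ?_, ?_, ?_, ?_⟩
    · intro i'; simp only [fire_fin_q]; exact hA i'
    · intro i' j' d' h1
      simp only [fire_fin_qv] at h1
      simp only [fire_fin_q]
      exact hB i' j' d' h1
    · intro j' h1
      simp only [fire_fin_C] at h1
      obtain ⟨hw, hq0⟩ := hC j' (by omega)
      exact ⟨hw, fun i' hi' => by simp only [fire_fin_q]; exact hq0 i' hi'⟩
    · intro _ j'
      obtain ⟨hw, hq0⟩ := hC j' (hCj j')
      exact ⟨hw, fun i' hi' => by simp only [fire_fin_q]; exact hq0 i' hi'⟩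

lemma inv_reachable (ha : Nonempty (Fin n → Fin dom)) {M : CPl n m dom → ℕ}
    (h : reachable (cspNet I) cspM0 M) : ∃ a, CInv I a M := by
  induction h with
  | refl =>
    obtain ⟨a⟩ := ha
    exact ⟨a, fun i => le_refl 1, fun i j d h => by simp [cspM0] at h,
      fun j h => by simp [cspM0] at h, fun h => by simp [cspM0] at h⟩
  | tail _ hstep ih =>
    obtain ⟨a, hInv⟩ := ih
    exact inv_step I hInv hstep

/-- In the degenerate case where there is no assignment at all, the token in `q i`
can never move. -/
lemma q_const (i : Fin n) (hdom : dom = 0) {M : CPl n m dom → ℕ}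
    (h : reachable (cspNet I) cspM0 M) : M (.q i) = 1 := by
  induction h with
  | refl => rfl
  | tail _ hstep ih =>
    obtain ⟨τ, hen, rfl⟩ := hstep
    cases τ with
    | t i' d => exact absurd d.2 (by omega)
    | tc i' j d => exact absurd d.2 (by omega)
    | con j f => exact absurd (f i).2 (by omega)
    | fin => simp only [fire_fin_q]; exact ih

/-- The marking after firing `t i (a i)` for every `i ∈ S`. -/
def MA (a : Fin n → Fin dom) (S : Finset (Fin n)) : CPl n m dom → ℕ := fun p =>
  match p with
  | .q i => if i ∈ S then 0 else 1
  | .qv i j d => if i ∈ S ∧ i ∈ I.scope j ∧ d = a i then 1 else 0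
  | _ => 0

/-- The marking after additionally firing the constraint-transitions for `j ∈ S`. -/
def MB (a : Fin n → Fin dom) (S : Finset (Fin m)) : CPl n m dom → ℕ := fun p =>
  match p with
  | .qv i j d => if i ∈ I.scope j ∧ d = a i ∧ j ∉ S then 1 else 0
  | .C j => if j ∈ S then 1 else 0
  | _ => 0

lemma reach_MA (a : Fin n → Fin dom) (S : Finset (Fin n)) :
    reachable (cspNet I) cspM0 (MA I a S) := by
  classical
  induction S using Finset.induction_on with
  | empty =>
    have : MA I a ∅ = cspM0 := by
      funext p; cases p <;> simp [MA, cspM0]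
    rw [this]; exact Relation.ReflTransGen.refl
  | @insert i S hiS ih =>
    refine Relation.ReflTransGen.tail ih ⟨.t i (a i), ?_, ?_⟩
    · intro p
      cases p with
      | q i' =>
        simp only [cspNet, cspPre]
        split_ifs with h
        · obtain rfl := CPl.q.inj h
          simp [MA, hiS]
        · exact Nat.zero_le _
      | qv i' j d => simp [cspNet, cspPre]
      | C j => simp [cspNet, cspPre]
      | g => simp [cspNet, cspPre]
    · funext p
      cases p with
      | q i' =>
        simp only [fire_t_q, MA, Finset.mem_insert]
        by_cases h : i' = i
        · subst h; simp [hiS]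
        · simp [h]
      | qv i' j d =>
        simp only [fire_t_qv, MA, Finset.mem_insert]
        by_cases h : i' = i
        · subst h
          by_cases hs : i' ∈ I.scope j <;> by_cases hd : d = a i' <;>
            simp [hs, hd, hiS]
        · simp [h]
      | C j => simp [MA]
      | g => simp [MA]

lemma reach_MB (a : Fin n → Fin dom) (hsat : ∀ j : Fin m, ∃ f ∈ I.adm j, ∀ i ∈ I.scope j, f i = a i)
    (S : Finset (Fin m)) : reachable (cspNet I) cspM0 (MB I a S) := by
  classical
  induction S using Finset.induction_on with
  | empty =>
    have : MB I a ∅ = MA I a Finset.univ := by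
      funext p; cases p <;> simp [MA, MB]
    rw [this]; exact reach_MA I a Finset.univ
  | @insert j S hjS ih =>
    obtain ⟨f, hf, hfa⟩ := hsat j
    refine Relation.ReflTransGen.tail ih ⟨.con j f, ?_, ?_⟩
    · intro p
      cases p with
      | q i => simp [cspNet, cspPre, hf]
      | qv i' j' d =>
        simp only [cspNet, cspPre, if_pos hf]
        split_ifs with h
        · obtain ⟨i'', hi'', heq⟩ := h
          obtain ⟨h1, h2, h3⟩ := CPl.qv.inj heq
          subst h1; subst h2; subst h3
          simp [MB, hi'', hfa i' hi'', hjS]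
        · exact Nat.zero_le _
      | C j' => simp [cspNet, cspPre, hf]
      | g => simp [cspNet, cspPre, hf]
    · funext p
      cases p with
      | q i => simp [MB]
      | qv i' j' d =>
        simp only [fire_con_qv, MB, Finset.mem_insert]
        by_cases hjj : j' = j
        · subst hjj
          by_cases hs : i' ∈ I.scope j' <;> by_cases hd : d = a i'
          · simp [hf, hs, hd, hjS, hfa i' hs]
          · have : ¬ d = f i' := by rw [hfa i' hs]; exact hd
            simp [hf, hs, hd, this]
          · simp [hs]
          · simp [hs]
        · simp [hjj]
      | C j' =>
        simp only [fire_con_C, if_pos hf, MB, Finset.mem_insert]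
        by_cases hjj : j' = j
        · subst hjj; simp [hjS]
        · simp [hjj]
      | g => simp [MB, hf]

lemma reach_final (a : Fin n → Fin dom)
    (hsat : ∀ j : Fin m, ∃ f ∈ I.adm j, ∀ i ∈ I.scope j, f i = a i) :
    reachable (cspNet I) cspM0 cspMf := by
  classical
  refine Relation.ReflTransGen.tail (reach_MB I a hsat Finset.univ) ⟨.fin, ?_, ?_⟩
  · intro p
    cases p with
    | q i => simp [cspNet, cspPre]
    | qv i j d => simp [cspNet, cspPre]
    | C j => simp [cspNet, cspPre, MB]
    | g => simp [cspNet, cspPre]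
  · funext p
    cases p with
    | q i => simp [MB, cspMf]
    | qv i j d => simp [MB, cspMf]
    | C j => simp [MB, cspMf]
    | g => simp [MB, cspMf]

end Aux

/-- Correctness of the reduction from CSP to reachability in 1-safe Petri nets: the
final marking (one token in `g`, none elsewhere) is reachable from the initial marking
(one token in each `q i`) iff the CSP instance is satisfiable. -/
theorem cspNet_reach_iff_satisfiable (I : CSP n m dom) :
    reachable (cspNet I) cspM0 cspMf ↔ Satisfiable I := by
  constructor
  · intro h
    by_cases ha : Nonempty (Fin n → Fin dom)
    · obtain ⟨a, _, _, _, hD⟩ := inv_reachable I ha h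
      refine ⟨a, fun j => (hD (by simp [cspMf]) j).1⟩
    · exfalso
      have hn : n ≠ 0 := by
        intro hn; subst hn; exact ha ⟨fun i => i.elim0⟩
      have hdom : dom = 0 := by
        by_contra hd
        exact ha ⟨fun _ => ⟨0, Nat.pos_of_ne_zero hd⟩⟩
      have := q_const I ⟨0, Nat.pos_of_ne_zero hn⟩ hdom h
      simp [cspMf] at this
  · rintro ⟨a, hsat⟩
    exact reach_final I a hsat
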